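/- Let G and G' be simple graphs on the same vertex set whose degree sequences d, d' satisfy ‖d − d'‖₁ ≤ 2, and suppose G minimizes |E(G △ G')| among all realizations of d. Then G △ G' contains no cycle alternating between edges of G and edges of G'; equivalently, G △ G' is either empty or a single path. -/

import Mathlib

open Finset

/-- Toggle the edges in `F` (a set of non-diagonal `Sym2`s) in `G`. -/
def auxToggle {V : Type*} [DecidableEq V] (G : SimpleGraph V) (F : Finset (Sym2 V))
    (hF : ∀ e ∈ F, ¬ e.IsDiag) : SimpleGraph V where
  Adj x y := Xor (G.Adj x y) (s(x, y) ∈ F)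
  symm := by
    constructor
    intro x y h
    rwa [SimpleGraph.adj_comm, Sym2.eq_swap] at h
  loopless := by
    constructor
    intro x h
    rcases h with ⟨h, _⟩ | ⟨h, _⟩
    · exact G.loopless.irrefl x h
    · exact hF _ h (by simp)

instance auxToggleDec {V : Type*} [DecidableEq V] (G : SimpleGraph V) [DecidableRel G.Adj]
    (F : Finset (Sym2 V)) (hF : ∀ e ∈ F, ¬ e.IsDiag) :
    DecidableRel (auxToggle G F hF).Adj := fun _ _ =>
  inferInstanceAs (Decidable (Xor _ _))

theorem auxToggle_edgeFinset {V : Type*} [Fintype V] [DecidableEq V] (G : SimpleGraph V)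
    [DecidableRel G.Adj] (F : Finset (Sym2 V)) (hF : ∀ e ∈ F, ¬ e.IsDiag) :
    (auxToggle G F hF).edgeFinset = symmDiff G.edgeFinset F := by
  ext e
  induction e with
  | _ x y =>
    rw [SimpleGraph.mem_edgeFinset]
    simp [SimpleGraph.mem_edgeFinset, auxToggle, mem_symmDiff, Xor,
      SimpleGraph.mem_edgeSet]

theorem auxToggle_neighborFinset {V : Type*} [Fintype V] [DecidableEq V] (G : SimpleGraph V)
    [DecidableRel G.Adj] (F : Finset (Sym2 V)) (hF : ∀ e ∈ F, ¬ e.IsDiag) (v : V) :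
    (auxToggle G F hF).neighborFinset v =
      symmDiff (G.neighborFinset v) (univ.filter fun w => s(v, w) ∈ F) := by
  ext w
  rw [SimpleGraph.mem_neighborFinset]
  simp [SimpleGraph.mem_neighborFinset, auxToggle, mem_symmDiff, Xor]

theorem aux_card_symmDiff_pair {α : Type*} [DecidableEq α] (A : Finset α) (p q : α)
    (hp : p ∈ A) (hq : q ∉ A) (hpq : p ≠ q) : (symmDiff A {p, q}).card = A.card := by
  have h1 : A \ ({p, q} : Finset α) = A.erase p := by
    ext x
    simp only [mem_sdiff, mem_insert, mem_singleton, mem_erase]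
    constructor
    · rintro ⟨hx, h⟩; exact ⟨fun h' => h (Or.inl h'), hx⟩
    · rintro ⟨hx, hxA⟩
      refine ⟨hxA, ?_⟩
      rintro (rfl | rfl)
      · exact hx rfl
      · exact hq hxA
  have h2 : ({p, q} : Finset α) \ A = {q} := by
    ext x
    simp only [mem_sdiff, mem_insert, mem_singleton]
    constructor
    · rintro ⟨rfl | rfl, hx⟩
      · exact absurd hp hx
      · rfl
    · rintro rfl; exact ⟨Or.inr rfl, hq⟩
  rw [symmDiff_def]
  rw [show A \ ({p,q}:Finset α) ⊔ ({p,q}:Finset α) \ A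
      = (A \ ({p,q}:Finset α)) ∪ (({p,q}:Finset α) \ A) from rfl]
  rw [card_union_of_disjoint disjoint_sdiff_sdiff, h1, h2, card_singleton,
    card_erase_add_one hp]

theorem stmt_8 {V : Type*} [Fintype V] [DecidableEq V]
    (G G' : SimpleGraph V) [DecidableRel G.Adj] [DecidableRel G'.Adj]
    (hdeg : (∑ v, |(G.degree v : ℤ) - (G'.degree v : ℤ)|) ≤ 2)
    (hmin : ∀ (H : SimpleGraph V) [DecidableRel H.Adj],
      (∀ v, H.degree v = G.degree v) →
      (symmDiff G.edgeFinset G'.edgeFinset).card ≤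
        (symmDiff H.edgeFinset G'.edgeFinset).card) :
    ¬ ∃ (m : ℕ) (a b : ZMod m → V), 2 ≤ m ∧
      Function.Injective (Sum.elim a b) ∧
      (∀ i, G.Adj (a i) (b i) ∧ ¬ G'.Adj (a i) (b i)) ∧
      (∀ i, G'.Adj (b i) (a (i + 1)) ∧ ¬ G.Adj (b i) (a (i + 1))) := by
  rintro ⟨m, a, b, hm, hinj, hG, hG'⟩
  haveI : NeZero m := ⟨by omega⟩
  have ha : Function.Injective a := fun i j h => by
    have := hinj (a₁ := Sum.inl i) (a₂ := Sum.inl j) (by simpa using h)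
    simpa using this
  have hb : Function.Injective b := fun i j h => by
    have := hinj (a₁ := Sum.inr i) (a₂ := Sum.inr j) (by simpa using h)
    simpa using this
  have hab : ∀ i j, a i ≠ b j := fun i j h => by
    have := hinj (a₁ := Sum.inl i) (a₂ := Sum.inr j) (by simpa using h)
    simp at this
  have hone : (1 : ZMod m) ≠ 0 := by
    intro h
    have h1 : ((1 : ℕ) : ZMod m) = 0 := by simpa using h
    rw [ZMod.natCast_eq_zero_iff] at h1
    have := Nat.le_of_dvd one_pos h1
    omega
  set F : Finset (Sym2 V) :=
    (univ.image fun i => s(a i, b i)) ∪ (univ.image fun i => s(b i, a (i + 1))) with hF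
  have hmemF : ∀ x y : V, s(x, y) ∈ F ↔
      (∃ i, s(x, y) = s(a i, b i)) ∨ (∃ i, s(x, y) = s(b i, a (i + 1))) := by
    intro x y
    simp [hF, eq_comm]
  have hFd : ∀ e ∈ F, ¬ e.IsDiag := by
    intro e he
    induction e with
    | _ x y =>
      rw [hmemF] at he
      rcases he with ⟨i, h⟩ | ⟨i, h⟩ <;> rw [Sym2.eq_iff] at h <;>
        rcases h with ⟨rfl, rfl⟩ | ⟨rfl, rfl⟩ <;> simp [Sym2.mk_isDiag_iff]
      · exact hab i i
      · exact fun h => hab i i h.symm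
      · exact fun h => hab (i + 1) i h.symm
      · exact hab (i + 1) i
  have hdegH : ∀ v, (auxToggle G F hFd).degree v = G.degree v := by
    intro v
    rw [← SimpleGraph.card_neighborFinset_eq_degree, ← SimpleGraph.card_neighborFinset_eq_degree,
      auxToggle_neighborFinset]
    by_cases hva : ∃ j, v = a j
    · obtain ⟨j, rfl⟩ := hva
      have hNC : (univ.filter fun w => s(a j, w) ∈ F) = {b j, b (j - 1)} := by
        ext w
        simp only [mem_filter, mem_univ, true_and, mem_insert, mem_singleton, hmemF]
        constructor
        · rintro (⟨i, h⟩ | ⟨i, h⟩) <;> rw [Sym2.eq_iff] at h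
          · rcases h with ⟨hai, rfl⟩ | ⟨hai, rfl⟩
            · left; rw [ha hai]
            · exact absurd hai (hab j i)
          · rcases h with ⟨hai, rfl⟩ | ⟨hai, rfl⟩
            · exact absurd hai (hab j i)
            · right
              rw [show i = j - 1 from by rw [eq_sub_iff_add_eq]; exact (ha hai).symm]
        · rintro (rfl | rfl)
          · exact Or.inl ⟨j, rfl⟩
          · exact Or.inr ⟨j - 1, by rw [sub_add_cancel]; exact Sym2.eq_swap⟩
      rw [hNC]
      refine aux_card_symmDiff_pair _ _ _
        (by rw [SimpleGraph.mem_neighborFinset]; exact (hG j).1) ?_ ?_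
      · rw [SimpleGraph.mem_neighborFinset]
        intro h
        exact (hG' (j - 1)).2 (by rw [sub_add_cancel]; exact h.symm)
      · intro h
        have h2 : j - 1 = j := (hb h).symm
        rw [sub_eq_self] at h2
        exact hone h2
    · by_cases hvb : ∃ j, v = b j
      · obtain ⟨j, rfl⟩ := hvb
        have hNC : (univ.filter fun w => s(b j, w) ∈ F) = {a j, a (j + 1)} := by
          ext w
          simp only [mem_filter, mem_univ, true_and, mem_insert, mem_singleton, hmemF]
          constructor
          · rintro (⟨i, h⟩ | ⟨i, h⟩) <;> rw [Sym2.eq_iff] at h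
            · rcases h with ⟨hai, rfl⟩ | ⟨hai, rfl⟩
              · exact absurd hai.symm (hab i j)
              · left; rw [hb hai]
            · rcases h with ⟨hai, rfl⟩ | ⟨hai, rfl⟩
              · right; rw [hb hai]
              · exact absurd hai.symm (hab (i + 1) j)
          · rintro (rfl | rfl)
            · exact Or.inl ⟨j, Sym2.eq_swap⟩
            · exact Or.inr ⟨j, rfl⟩
        rw [hNC]
        refine aux_card_symmDiff_pair _ _ _
          (by rw [SimpleGraph.mem_neighborFinset]; exact (hG j).1.symm) ?_ ?_
        · rw [SimpleGraph.mem_neighborFinset]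
          exact (hG' j).2
        · intro h
          have h2 : j = j + 1 := ha h
          have h3 : (1 : ZMod m) = 0 := by
            have := (left_eq_add (a := j) (b := (1 : ZMod m))).mp h2
            exact this
          exact hone h3
      · push_neg at hva hvb
        have hNC : (univ.filter fun w => s(v, w) ∈ F) = ∅ := by
          ext w
          simp only [mem_filter, mem_univ, true_and, hmemF, notMem_empty, iff_false]
          rintro (⟨i, h⟩ | ⟨i, h⟩) <;> rw [Sym2.eq_iff] at h <;>
            rcases h with ⟨h, _⟩ | ⟨h, _⟩
          exacts [hva i h, hvb i h, hvb i h, hva (i + 1) h]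
        rw [hNC, show (∅ : Finset V) = ⊥ from rfl, symmDiff_bot]
  -- F is contained in the symmetric difference
  have hsub : F ⊆ symmDiff G.edgeFinset G'.edgeFinset := by
    intro e he
    induction e with
    | _ x y =>
      rw [hmemF] at he
      rcases he with ⟨i, h⟩ | ⟨i, h⟩ <;>
        rw [mem_symmDiff] <;>
        simp only [h, SimpleGraph.mem_edgeFinset, SimpleGraph.mem_edgeSet]
      · exact Or.inl ⟨(hG i).1, (hG i).2⟩
      · exact Or.inr ⟨(hG' i).1, (hG' i).2⟩
  have hne : s(a 0, b 0) ∈ F := (hmemF _ _).2 (Or.inl ⟨0, rfl⟩)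
  have hpos : 0 < F.card := card_pos.2 ⟨_, hne⟩
  have key := hmin (auxToggle G F hFd) hdegH
  rw [auxToggle_edgeFinset] at key
  have e1 : symmDiff (symmDiff G.edgeFinset F) G'.edgeFinset =
      (symmDiff G.edgeFinset G'.edgeFinset) \ F := by
    rw [symmDiff_assoc, symmDiff_comm F, ← symmDiff_assoc, symmDiff_comm _ F,
      symmDiff_of_le hsub]
  rw [e1, card_sdiff_of_subset hsub] at key
  have hle := card_le_card hsub
  omega
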